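/- arXiv:0712.3873 — 7 statements merged into one kernel-verified Lean document; each statement's English description precedes it below -/
import Mathlib

section
/- Let k be an algebraically closed field of characteristic different from 2 and 3, and fix M = 3 or M = 4. Let f, g ∈ k[T] be polynomials with deg(f) = 2M and deg(g) = 3M. If f³ ≠ g², then deg(f³ − g²) ≥ M + 1. -/
open Polynomial


-- descent lemma: zero Wronskian implies common-factor decomposition with zero derivatives
private lemma wronskian_descent {k : Type*} [Field k] {x y : k[X]} (hx : x ≠ 0) (hy : y ≠ 0)
    (hw : derivative x * y = x * derivative y) :
    ∃ d u w : k[X], x = d * u ∧ y = d * w ∧ derivative u = 0 ∧ derivative w = 0 ∧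
      IsCoprime u w := by
  classical
  set d := GCDMonoid.gcd x y with hd
  have hd0 : d ≠ 0 := gcd_ne_zero_of_right hy
  have hxd : d * (x / d) = x := EuclideanDomain.mul_div_cancel' hd0 (gcd_dvd_left x y)
  have hyd : d * (y / d) = y := EuclideanDomain.mul_div_cancel' hd0 (gcd_dvd_right x y)
  set u := x / d with hu
  set w := y / d with hwdef
  have hcop : IsCoprime u w := isCoprime_div_gcd_div_gcd hy
  have hu0 : u ≠ 0 := fun h0 => hx (by rw [← hxd, h0, mul_zero])
  have hw0 : w ≠ 0 := fun h0 => hy (by rw [← hyd, h0, mul_zero])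
  have key : derivative u * w = u * derivative w := by
    apply mul_left_cancel₀ (mul_ne_zero hd0 hd0)
    have h1 : derivative (d * u) * (d * w) = (d * u) * derivative (d * w) := by
      rw [hxd, hyd]; exact hw
    rw [derivative_mul, derivative_mul] at h1
    linear_combination h1
  have hu' : derivative u = 0 := by
    by_contra hne
    have hdvd : u ∣ derivative u * w := ⟨derivative w, key⟩
    have hdvd2 : u ∣ derivative u := hcop.dvd_of_dvd_mul_right hdvd
    exact absurd (Polynomial.degree_le_of_dvd hdvd2 hne)
      (not_le.mpr (Polynomial.degree_derivative_lt hu0))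
  have hw' : derivative w = 0 := by
    by_contra hne
    have hdvd : w ∣ u * derivative w := ⟨derivative u, by rw [← key]; ring⟩
    have hdvd2 : w ∣ derivative w := hcop.symm.dvd_of_dvd_mul_left hdvd
    exact absurd (Polynomial.degree_le_of_dvd hdvd2 hne)
      (not_le.mpr (Polynomial.degree_derivative_lt hw0))
  exact ⟨d, u, w, hxd.symm, hyd.symm, hu', hw', hcop⟩

-- small degree + zero derivative + 2,3 invertible ⇒ constant
private lemma small_const {k : Type*} [Field k] (h2 : (2:k) ≠ 0) (h3 : (3:k) ≠ 0)
    {w : k[X]} (hd : derivative w = 0) (hdeg : w.natDegree ≤ 4) : w.natDegree = 0 := by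
  by_contra hne
  have h1 : 1 ≤ w.natDegree := Nat.one_le_iff_ne_zero.mpr hne
  have hco : w.coeff w.natDegree * (((w.natDegree - 1 : ℕ) : k) + 1) = 0 := by
    have := Polynomial.coeff_derivative w (w.natDegree - 1)
    rw [hd, Nat.sub_add_cancel h1] at this
    simpa using this.symm
  have hlc : w.coeff w.natDegree ≠ 0 := by
    rw [← Polynomial.leadingCoeff]
    exact Polynomial.leadingCoeff_ne_zero.mpr (fun h0 => by simp [h0] at hne)
  have hcast : (((w.natDegree - 1 : ℕ) : k) + 1) = 0 := by
    rcases mul_eq_zero.mp hco with h | h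
    · exact absurd h hlc
    · exact h
  have h4 : (4:k) ≠ 0 := by
    intro h4
    exact h2 (by rcases mul_eq_zero.mp (show (2:k)*2 = 0 by rw [← h4]; norm_num) with h|h <;> exact h)
  interval_cases hn : w.natDegree <;> norm_num at hcast
  · exact h2 hcast
  · exact h3 hcast
  · exact h4 (by linear_combination hcast)


-- p-th root of a polynomial with zero derivative over an alg. closed field of char p
private lemma pth_root {k : Type*} [Field k] [IsAlgClosed k] (p : ℕ) [Fact p.Prime] [CharP k p]
    {u : k[X]} (hu : derivative u = 0) : ∃ U : k[X], U ^ p = u := by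
  have hexp := Polynomial.expand_contract p hu (Nat.Prime.ne_zero Fact.out)
  obtain ⟨c, hc⟩ := Polynomial.map_surjective (frobenius k p)
    (surjective_frobenius k p) (Polynomial.contract p u)
  refine ⟨c, ?_⟩
  have h1 : Polynomial.map (frobenius k p) (Polynomial.expand k p c) = c ^ p :=
    Polynomial.map_frobenius_expand p c
  rw [Polynomial.map_expand, hc, hexp] at h1
  exact h1.symm

-- root multiplicity bounded by natDegree
private lemma rm_le {k : Type*} [Field k] {W : k[X]} (h0 : W ≠ 0) (q : k) :
    rootMultiplicity q W ≤ W.natDegree :=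
  Polynomial.natDegree_le_of_dvd (Polynomial.pow_rootMultiplicity_dvd W q) h0
    |>.trans_eq' (by simp [Polynomial.natDegree_pow])

-- coprimality of distinct linear factors
private lemma lin_coprime {k : Type*} [Field k] {x y : k} (hxy : x ≠ y) :
    IsCoprime (X - C x : k[X]) (X - C y) :=
  Polynomial.isCoprime_X_sub_C_of_isUnit_sub (IsUnit.mk0 _ (sub_ne_zero.mpr hxy))

-- two-point multiplicity budget
private lemma rm2_le {k : Type*} [Field k] {W : k[X]} (h0 : W ≠ 0) {x y : k} (hxy : x ≠ y) :
    rootMultiplicity x W + rootMultiplicity y W ≤ W.natDegree := by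
  have hdvd : (X - C x) ^ rootMultiplicity x W * (X - C y) ^ rootMultiplicity y W ∣ W :=
    ((lin_coprime hxy).pow).mul_dvd (Polynomial.pow_rootMultiplicity_dvd W x)
      (Polynomial.pow_rootMultiplicity_dvd W y)
  have := Polynomial.natDegree_le_of_dvd hdvd h0
  rw [Polynomial.natDegree_mul (pow_ne_zero _ (X_sub_C_ne_zero x))
      (pow_ne_zero _ (X_sub_C_ne_zero y))] at this
  simpa [Polynomial.natDegree_pow] using this

-- three-point multiplicity budget
private lemma rm3_le {k : Type*} [Field k] {W : k[X]} (h0 : W ≠ 0) {x y z : k}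
    (hxy : x ≠ y) (hxz : x ≠ z) (hyz : y ≠ z) :
    rootMultiplicity x W + rootMultiplicity y W + rootMultiplicity z W ≤ W.natDegree := by
  have hdvd : ((X - C x) ^ rootMultiplicity x W * (X - C y) ^ rootMultiplicity y W)
      * (X - C z) ^ rootMultiplicity z W ∣ W := by
    apply IsCoprime.mul_dvd
    · exact ((lin_coprime hxz).pow.mul_left (lin_coprime hyz).pow)
    · exact ((lin_coprime hxy).pow).mul_dvd (Polynomial.pow_rootMultiplicity_dvd W x)
        (Polynomial.pow_rootMultiplicity_dvd W y)
    · exact Polynomial.pow_rootMultiplicity_dvd W z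
  have := Polynomial.natDegree_le_of_dvd hdvd h0
  rw [Polynomial.natDegree_mul (mul_ne_zero (pow_ne_zero _ (X_sub_C_ne_zero x))
      (pow_ne_zero _ (X_sub_C_ne_zero y))) (pow_ne_zero _ (X_sub_C_ne_zero z)),
    Polynomial.natDegree_mul (pow_ne_zero _ (X_sub_C_ne_zero x))
      (pow_ne_zero _ (X_sub_C_ne_zero y))] at this
  simpa [Polynomial.natDegree_pow] using this

-- derivative vanishes at a root of multiplicity ≥ 2
private lemma der_root {k : Type*} [Field k] {W : k[X]} {q : k}
    (hq : 2 ≤ rootMultiplicity q W) : (derivative W).eval q = 0 := by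
  obtain ⟨c, hc⟩ : (X - C q) ^ 2 ∣ W :=
    dvd_trans (pow_dvd_pow _ hq) (Polynomial.pow_rootMultiplicity_dvd W q)
  rw [hc]
  simp [derivative_mul, derivative_pow]


private lemma rm_eq {k : Type*} [Field k] {f h V : k[X]} {n p : ℕ}
    (hf : f ≠ 0) (hh : h ≠ 0) (hV : V ≠ 0) (heq : f ^ n = h * V ^ p) (q : k) :
    n * rootMultiplicity q f = rootMultiplicity q h + p * rootMultiplicity q V := by
  classical
  have h1 : (f ^ n).roots = n • f.roots := Polynomial.roots_pow f n
  have h2 : (h * V ^ p).roots = h.roots + p • V.roots := by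
    rw [Polynomial.roots_mul (by rw [← heq]; exact pow_ne_zero _ hf), Polynomial.roots_pow]
  have h3 := congrArg (Multiset.count q) (h1.symm.trans (heq ▸ h2))
  rwa [Multiset.count_nsmul, Multiset.count_add, Multiset.count_nsmul,
    Polynomial.count_roots, Polynomial.count_roots, Polynomial.count_roots] at h3

private lemma card_roots_eq {k : Type*} [Field k] [IsAlgClosed k] (W : k[X]) :
    W.roots.card = W.natDegree :=
  Polynomial.splits_iff_card_roots.mp (IsAlgClosed.splits W)

private lemma second_root {k : Type*} [Field k] {W : k[X]} (hW : W ≠ 0) {a : k}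
    (hlt : rootMultiplicity a W < W.roots.card) :
    ∃ b, b ≠ a ∧ 1 ≤ rootMultiplicity b W := by
  classical
  by_contra hcon
  push_neg at hcon
  have : W.roots.count a = W.roots.card := by
    rw [Multiset.count_eq_card]
    intro x hx
    by_contra hxa
    have hx1 : 1 ≤ rootMultiplicity x W := by
      rw [← Polynomial.count_roots]; exact Multiset.one_le_count_iff_mem.mpr hx
    exact absurd hx1 (by simpa using hcon x (fun h => hxa (h ▸ rfl)))
  rw [Polynomial.count_roots] at this
  omega

private lemma shape_full {k : Type*} [Field k] {W : k[X]} (hW : W ≠ 0) {q : k}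
    (hq : rootMultiplicity q W = W.natDegree) :
    W = C W.leadingCoeff * (X - C q) ^ W.natDegree := by
  obtain ⟨c, hc⟩ := Polynomial.pow_rootMultiplicity_dvd W q
  rw [hq] at hc
  have hc0 : c ≠ 0 := fun h0 => hW (by rw [hc, h0, mul_zero])
  have hdeg := congrArg natDegree hc
  rw [Polynomial.natDegree_mul (pow_ne_zero _ (X_sub_C_ne_zero q)) hc0] at hdeg
  simp only [Polynomial.natDegree_pow, Polynomial.natDegree_X_sub_C, mul_one] at hdeg
  obtain ⟨a, ha⟩ := Polynomial.natDegree_eq_zero.mp (show c.natDegree = 0 by omega)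
  have hlc : W.leadingCoeff = a := by
    rw [hc, ← ha, Polynomial.leadingCoeff_mul, Polynomial.leadingCoeff_pow]
    simp
  conv_lhs => rw [hc, ← ha]
  rw [hlc, hc, ← ha]
  have hd2 : ((X - C q) ^ W.natDegree * C a).natDegree = W.natDegree := by
    rw [Polynomial.natDegree_mul (pow_ne_zero _ (X_sub_C_ne_zero q)) (ha ▸ hc0)]
    simp [Polynomial.natDegree_pow]
  rw [hd2]
  ring

private lemma shape_roots {k : Type*} [Field k] [IsAlgClosed k] {W : k[X]} (hW : W ≠ 0)
    {m : Multiset k} (hm : W.roots = m) :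
    W = C W.leadingCoeff * (m.map fun a => X - C a).prod := by
  conv_lhs => rw [Polynomial.Splits.eq_prod_roots (IsAlgClosed.splits W), hm]



private lemma caseA {k : Type*} [Field k] [IsAlgClosed k] {f g h U V : k[X]} {p : ℕ}
    (hh0 : h ≠ 0) (hV0 : V ≠ 0)
    (e1 : ∀ q : k, 3 * rootMultiplicity q f = rootMultiplicity q h + p * rootMultiplicity q V)
    (e2 : ∀ q : k, 2 * rootMultiplicity q g = rootMultiplicity q h + p * rootMultiplicity q U)
    (hVnotU : ∀ q : k, 1 ≤ rootMultiplicity q V → rootMultiplicity q U = 0)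
    (hp : p = 17 ∨ p = 23) (hn : h.natDegree = 1) (hdV : V.natDegree = 1) : False := by
  obtain ⟨a, ha⟩ := IsAlgClosed.exists_root V (by
    simp [Polynomial.degree_eq_natDegree hV0, hdV])
  have h1 : 1 ≤ rootMultiplicity a V := (Polynomial.rootMultiplicity_pos hV0).mpr ha
  have h2 := rm_le hV0 a
  have h3 := rm_le hh0 a
  have h4 := e1 a
  have h5 := e2 a
  have h6 := hVnotU a h1
  rw [hn] at h3
  rw [hdV] at h2
  rw [h6, mul_zero] at h5
  rcases hp with rfl | rfl <;> omega

private lemma caseB {k : Type*} [Field k] [IsAlgClosed k] (h2 : (2:k) ≠ 0)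
    {f g h U V : k[X]} {p : ℕ}
    (hh0 : h ≠ 0) (hU0 : U ≠ 0) (hV0 : V ≠ 0) (hVU : V = U + 1)
    (e1 : ∀ q : k, 3 * rootMultiplicity q f = rootMultiplicity q h + p * rootMultiplicity q V)
    (e2 : ∀ q : k, 2 * rootMultiplicity q g = rootMultiplicity q h + p * rootMultiplicity q U)
    (hVnotU : ∀ q : k, 1 ≤ rootMultiplicity q V → rootMultiplicity q U = 0)
    (hUnotV : ∀ q : k, 1 ≤ rootMultiplicity q U → rootMultiplicity q V = 0)
    (hUevalV : ∀ q : k, V.IsRoot q → U.eval q = -1)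
    (hp : p = 11) (hn : h.natDegree = 2) (hdV : V.natDegree = 2) (hdU : U.natDegree = 2) :
    False := by
  subst hp
  -- the leading coefficients of U and V agree
  have hlc : V.leadingCoeff = U.leadingCoeff := by
    rw [hVU]
    rw [add_comm]
    apply Polynomial.leadingCoeff_add_of_degree_lt
    rw [Polynomial.degree_one, Polynomial.degree_eq_natDegree hU0, hdU]
    exact_mod_cast Nat.zero_lt_two
  set α := U.leadingCoeff with hα
  -- a double root of V
  obtain ⟨a, ha⟩ := IsAlgClosed.exists_root V (by simp [Polynomial.degree_eq_natDegree hV0, hdV])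
  have ha1 : 1 ≤ rootMultiplicity a V := (Polynomial.rootMultiplicity_pos hV0).mpr ha
  have ha2 : rootMultiplicity a V = 2 := by
    have h4 := e1 a; have h5 := e2 a
    have h6 := hVnotU a ha1
    have h7 := rm_le hh0 a; have h8 := rm_le hV0 a
    rw [h6, mul_zero] at h5
    rw [hn] at h7; rw [hdV] at h8
    omega
  have hVshape : V = C α * (X - C a) ^ 2 := by
    have := shape_full hV0 (by rw [ha2, hdV])
    rwa [hdV, hlc] at this
  -- a double root of U
  obtain ⟨t, ht⟩ := IsAlgClosed.exists_root U (by simp [Polynomial.degree_eq_natDegree hU0, hdU])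
  have ht1 : 1 ≤ rootMultiplicity t U := (Polynomial.rootMultiplicity_pos hU0).mpr ht
  have ht2 : rootMultiplicity t U = 2 := by
    have h4 := e1 t; have h5 := e2 t
    have h6 := hUnotV t ht1
    have h7 := rm_le hh0 t; have h8 := rm_le hU0 t
    rw [h6, mul_zero] at h4
    rw [hn] at h7; rw [hdU] at h8
    omega
  have hUshape : U = C α * (X - C t) ^ 2 := by
    have := shape_full hU0 (by rw [ht2, hdU])
    rwa [hdU] at this
  -- evaluate U at a and V at t
  have hUa : α * (a - t) ^ 2 = -1 := by
    have := hUevalV a ha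
    rw [hUshape] at this
    simpa using this
  have hVt : α * (t - a) ^ 2 = 1 := by
    have hVt' : V.eval t = 1 := by
      rw [hVU]; simp [ht.eq_zero]
    rw [hVshape] at hVt'
    simpa using hVt'
  have hsq : (a - t)^2 = (t - a)^2 := by ring
  rw [hsq, hVt] at hUa
  exact h2 (by linear_combination hUa)

private lemma caseC {k : Type*} [Field k] [IsAlgClosed k] (h3k : (3:k) ≠ 0)
    {f g h U V : k[X]} {p : ℕ}
    (hh0 : h ≠ 0) (hU0 : U ≠ 0) (hV0 : V ≠ 0) (hVU : V = U + 1)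
    (e1 : ∀ q : k, 3 * rootMultiplicity q f = rootMultiplicity q h + p * rootMultiplicity q V)
    (e2 : ∀ q : k, 2 * rootMultiplicity q g = rootMultiplicity q h + p * rootMultiplicity q U)
    (hVnotU : ∀ q : k, 1 ≤ rootMultiplicity q V → rootMultiplicity q U = 0)
    (hUnotV : ∀ q : k, 1 ≤ rootMultiplicity q U → rootMultiplicity q V = 0)
    (hUevalV : ∀ q : k, V.IsRoot q → U.eval q = -1)
    (hp : p = 5 ∨ p = 7) (hn : h.natDegree = 3) (hdV : V.natDegree = 3) (hdU : U.natDegree = 3) :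
    False := by
  have hcardV : V.roots.card = 3 := by rw [card_roots_eq, hdV]
  have hcardU : U.roots.card = 3 := by rw [card_roots_eq, hdU]
  -- every root of V has multiplicity 3
  have hVfull : ∀ q : k, 1 ≤ rootMultiplicity q V → rootMultiplicity q V = 3 := by
    intro q hq
    by_contra hne
    -- multiplicity is 1 or 2; get a second root
    have hq3 : rootMultiplicity q V < 3 := lt_of_le_of_ne (hdV ▸ rm_le hV0 q) hne
    obtain ⟨b, hba, hb1⟩ := second_root hV0 (by omega : rootMultiplicity q V < V.roots.card)
    have hbudV := rm2_le hV0 hba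
    have hbudH := rm2_le hh0 hba
    have h4 := e1 q; have h5 := e2 q; have h6 := hVnotU q hq
    have h4b := e1 b; have h5b := e2 b; have h6b := hVnotU b hb1
    have h7 := rm_le hh0 q; have h7b := rm_le hh0 b
    rw [h6, mul_zero] at h5; rw [h6b, mul_zero] at h5b
    rw [hn] at h7 h7b hbudH; rw [hdV] at hbudV
    have hqv : rootMultiplicity q V = 1 ∨ rootMultiplicity q V = 2 := by omega
    have hbv : rootMultiplicity b V = 1 ∨ rootMultiplicity b V = 2 := by omega
    rcases hp with rfl | rfl <;> rcases hqv with hx | hx <;> rcases hbv with hy | hy <;> omega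
  -- hence V = α (X - a)^3
  obtain ⟨a, ha⟩ := IsAlgClosed.exists_root V (by simp [Polynomial.degree_eq_natDegree hV0, hdV])
  have ha1 : 1 ≤ rootMultiplicity a V := (Polynomial.rootMultiplicity_pos hV0).mpr ha
  have hVshape : V = C V.leadingCoeff * (X - C a) ^ 3 := by
    have := shape_full hV0 (by rw [hVfull a ha1, hdV])
    rwa [hdV] at this
  set α := V.leadingCoeff with hα
  have hα0 : α ≠ 0 := Polynomial.leadingCoeff_ne_zero.mpr hV0
  -- U is squarefree: every root of U has multiplicity 1
  have hUsf : ∀ t : k, 1 ≤ rootMultiplicity t U → rootMultiplicity t U = 1 := by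
    intro t ht
    by_contra hne
    have ht2 : 2 ≤ rootMultiplicity t U := by omega
    have hder : (derivative U).eval t = 0 := der_root ht2
    have hderV : derivative V = derivative U := by rw [hVU]; simp
    have hderV2 : (derivative V).eval t = 0 := by rw [hderV]; exact hder
    rw [hVshape] at hderV2
    simp only [derivative_mul, derivative_C, zero_mul, zero_add, derivative_pow,
      Polynomial.derivative_sub, Polynomial.derivative_X, Polynomial.derivative_C,
      sub_zero, mul_one, eval_mul, eval_C, eval_pow, eval_sub, eval_X] at hderV2
    -- hderV2 : α * (3 * (t - a)^2) = 0 (in some arrangement)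
    have hta : t = a := by
      have h9 : (t - a) ^ 2 = 0 := by
        rcases mul_eq_zero.mp hderV2 with h | h
        · exact absurd h hα0
        · rcases mul_eq_zero.mp h with h' | h'
          · exact absurd (by simpa using h') h3k
          · simpa using h'
      have := pow_eq_zero_iff (n := 2) (by norm_num) |>.mp h9
      exact sub_eq_zero.mp this
    have hroot : U.IsRoot t := (Polynomial.rootMultiplicity_pos hU0).mp (by omega)
    have := hUevalV a ha
    rw [← hta] at this
    rw [hroot.eq_zero] at this
    exact one_ne_zero (by linear_combination this)
  -- U has two distinct roots, each contributing multiplicity 3 to h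
  obtain ⟨t₁, ht₁⟩ := IsAlgClosed.exists_root U (by simp [Polynomial.degree_eq_natDegree hU0, hdU])
  have ht₁1 : 1 ≤ rootMultiplicity t₁ U := (Polynomial.rootMultiplicity_pos hU0).mpr ht₁
  obtain ⟨t₂, ht21, ht22⟩ := second_root hU0 (by rw [hcardU, hUsf t₁ ht₁1]; norm_num)
  have hrh : ∀ t : k, 1 ≤ rootMultiplicity t U → rootMultiplicity t h = 3 := by
    intro t ht
    have h4 := e1 t; have h5 := e2 t; have h6 := hUnotV t ht
    have h7 := rm_le hh0 t
    have h8 := hUsf t ht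
    rw [h6, mul_zero] at h4
    rw [hn] at h7
    rcases hp with rfl | rfl <;> omega
  have hbud := rm2_le hh0 ht21
  rw [hrh t₁ ht₁1, hrh t₂ ht22, hn] at hbud
  omega

private lemma shape_pair {k : Type*} [Field k] [IsAlgClosed k] {W : k[X]} (hW : W ≠ 0)
    {a b : k} (hab : a ≠ b) {i j : ℕ}
    (ha : rootMultiplicity a W = i) (hb : rootMultiplicity b W = j)
    (hother : ∀ x : k, x ≠ a → x ≠ b → rootMultiplicity x W = 0) :
    W = C W.leadingCoeff * ((X - C a) ^ i * (X - C b) ^ j) := by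
  classical
  have hroots : W.roots = Multiset.replicate i a + Multiset.replicate j b := by
    rw [Multiset.ext]
    intro x
    rw [Polynomial.count_roots, Multiset.count_add, Multiset.count_replicate,
      Multiset.count_replicate]
    by_cases hxa : a = x
    · subst hxa
      rw [if_pos rfl, if_neg (fun h => hab h.symm), add_zero]
      exact ha
    · by_cases hxb : b = x
      · subst hxb
        rw [if_neg hxa, if_pos rfl, zero_add]
        exact hb
      · rw [if_neg hxa, if_neg hxb, add_zero]
        exact hother x (fun h => hxa h.symm) (fun h => hxb h.symm)
  have := shape_roots hW hroots
  rwa [Multiset.map_add, Multiset.map_replicate, Multiset.map_replicate, Multiset.prod_add,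
    Multiset.prod_replicate, Multiset.prod_replicate] at this

private lemma squareContra {k : Type*} [Field k] (h2k : (2:k) ≠ 0) {α a b t u : k} (hα0 : α ≠ 0)
    (hE : C α * ((X - C a) * (X - C b)) ^ 2 = C α * ((X - C t) * (X - C u)) ^ 2 + 1) : False := by
  set P : k[X] := (X - C a) * (X - C b) with hP
  set Q : k[X] := (X - C t) * (X - C u) with hQ
  have hPQ : C α * ((P - Q) * (P + Q)) = 1 := by linear_combination hE
  have hPm : P.Monic := (monic_X_sub_C a).mul (monic_X_sub_C b)
  have hQm : Q.Monic := (monic_X_sub_C t).mul (monic_X_sub_C u)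
  have hPd : P.natDegree = 2 := by
    rw [hP, (monic_X_sub_C a).natDegree_mul (monic_X_sub_C b)]
    simp
  have hQd : Q.natDegree = 2 := by
    rw [hQ, (monic_X_sub_C t).natDegree_mul (monic_X_sub_C u)]
    simp
  have hc2 : (P + Q).coeff 2 = 2 := by
    rw [Polynomial.coeff_add]
    have e1 : P.coeff 2 = 1 := by
      have := hPm.coeff_natDegree
      rwa [hPd] at this
    have e2 : Q.coeff 2 = 1 := by
      have := hQm.coeff_natDegree
      rwa [hQd] at this
    rw [e1, e2]; norm_num
  have hPQne : P + Q ≠ 0 := fun h0 => h2k (by rw [← hc2, h0]; simp)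
  have hdeg2 : 2 ≤ (P + Q).natDegree :=
    Polynomial.le_natDegree_of_ne_zero (by rw [hc2]; exact h2k)
  have hPmQ : P - Q ≠ 0 := by
    intro h0
    rw [h0, zero_mul, mul_zero] at hPQ
    exact one_ne_zero hPQ.symm
  have := congrArg natDegree hPQ
  rw [Polynomial.natDegree_mul (Polynomial.C_ne_zero.mpr hα0)
      (mul_ne_zero hPmQ hPQne),
    Polynomial.natDegree_mul hPmQ hPQne, Polynomial.natDegree_C, Polynomial.natDegree_one] at this
  omega

private lemma s3Contra {k : Type*} [Field k] (h2k : (2:k) ≠ 0) (h3k : (3:k) ≠ 0)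
    {α a b t u : k} (hα0 : α ≠ 0)
    (hE : C α * ((X - C a) * (X - C b) ^ 3) = C α * ((X - C t) * (X - C u)) ^ 2 + 1) : False := by
  have h4k : (4 : k) ≠ 0 := by
    intro h4
    exact h2k (by rcases mul_eq_zero.mp (show (2:k)*2 = 0 by rw [← h4]; norm_num) with h|h <;>
      exact h)
  set Q : k[X] := (X - C t) * (X - C u) with hQdef
  -- b is not a root of Q
  have hQb : Q.eval b ≠ 0 := by
    intro h0
    have := congrArg (eval b) hE
    simp only [eval_mul, eval_add, eval_pow, eval_one, eval_sub, eval_X, eval_C, sub_self] at this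
    rw [h0] at this
    simp at this
  have hbt : b ≠ t := by
    intro h0
    apply hQb
    rw [hQdef]; subst h0; simp
  have hbu : b ≠ u := by
    intro h0
    apply hQb
    rw [hQdef]; subst h0; simp
  -- differentiate the basic equation
  have hd := congrArg derivative hE
  have key : C α * ((X - C b) ^ 2 * ((X - C b) + C 3 * (X - C a)))
      = C α * (Q * (C 2 * ((X - C t) + (X - C u)))) := by
    simp only [derivative_add, derivative_one, derivative_mul, derivative_pow,
      derivative_sub, derivative_X, derivative_C, hQdef] at hd
    push_cast at hd
    linear_combination hd
  have key2 : (X - C b) ^ 2 * ((X - C b) + C 3 * (X - C a))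
      = Q * (C 2 * ((X - C t) + (X - C u))) :=
    mul_left_cancel₀ (Polynomial.C_ne_zero.mpr hα0) key
  set W₂ : k[X] := C 2 * ((X - C t) + (X - C u)) with hW₂
  have hdvd : (X - C b) ^ 2 ∣ Q * W₂ := ⟨(X - C b) + C 3 * (X - C a), key2.symm⟩
  have hcop : IsCoprime ((X - C b) ^ 2) Q :=
    ((lin_coprime hbt).mul_right (lin_coprime hbu)).pow_left
  have hdvd2 : (X - C b) ^ 2 ∣ W₂ := hcop.dvd_of_dvd_mul_left hdvd
  have hW₂c : W₂.coeff 1 = 4 := by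
    rw [hW₂]
    rw [Polynomial.coeff_C_mul, Polynomial.coeff_add, Polynomial.coeff_sub,
      Polynomial.coeff_sub, Polynomial.coeff_X_one, Polynomial.coeff_C]
    norm_num
  have hW₂0 : W₂ ≠ 0 := fun h0 => h4k (by rw [← hW₂c, h0]; simp)
  have hW₂d : W₂.natDegree ≤ 1 := by
    apply le_trans (Polynomial.natDegree_C_mul_le 2 _)
    apply le_trans (Polynomial.natDegree_add_le _ _)
    simp
  have := Polynomial.natDegree_le_of_dvd hdvd2 hW₂0
  rw [Polynomial.natDegree_pow, Polynomial.natDegree_X_sub_C] at this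
  omega

private lemma caseD {k : Type*} [Field k] [IsAlgClosed k]
    (h2k : (2:k) ≠ 0) (h3k : (3:k) ≠ 0)
    {f g h U V : k[X]} {p : ℕ}
    (hh0 : h ≠ 0) (hU0 : U ≠ 0) (hV0 : V ≠ 0) (hVU : V = U + 1)
    (e1 : ∀ q : k, 3 * rootMultiplicity q f = rootMultiplicity q h + p * rootMultiplicity q V)
    (e2 : ∀ q : k, 2 * rootMultiplicity q g = rootMultiplicity q h + p * rootMultiplicity q U)
    (hVnotU : ∀ q : k, 1 ≤ rootMultiplicity q V → rootMultiplicity q U = 0)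
    (hUnotV : ∀ q : k, 1 ≤ rootMultiplicity q U → rootMultiplicity q V = 0)
    (hp : p = 5) (hn : h.natDegree = 4) (hdV : V.natDegree = 4) (hdU : U.natDegree = 4) :
    False := by
  subst hp
  have hcardV : V.roots.card = 4 := by rw [card_roots_eq, hdV]
  have hcardU : U.roots.card = 4 := by rw [card_roots_eq, hdU]
  have hlc : V.leadingCoeff = U.leadingCoeff := by
    rw [hVU, add_comm]
    apply Polynomial.leadingCoeff_add_of_degree_lt
    rw [Polynomial.degree_one, Polynomial.degree_eq_natDegree hU0, hdU]
    exact_mod_cast Nat.zero_lt_succ 3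
  set α := U.leadingCoeff with hα
  have hα0 : α ≠ 0 := Polynomial.leadingCoeff_ne_zero.mpr hU0
  -- root type classification
  have typeV : ∀ q : k, 1 ≤ rootMultiplicity q V →
      (rootMultiplicity q V = 1 ∧ rootMultiplicity q h = 4) ∨
      (rootMultiplicity q V = 2 ∧ rootMultiplicity q h = 2) ∨
      (rootMultiplicity q V = 3 ∧ rootMultiplicity q h = 0) ∨
      (rootMultiplicity q V = 4 ∧ rootMultiplicity q h = 4) := by
    intro q hq
    have h4 := e1 q; have h5 := e2 q; have h6 := hVnotU q hq
    have h7 := rm_le hh0 q; have h8 := rm_le hV0 q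
    rw [h6, mul_zero] at h5; rw [hn] at h7; rw [hdV] at h8
    have : rootMultiplicity q V = 1 ∨ rootMultiplicity q V = 2 ∨
        rootMultiplicity q V = 3 ∨ rootMultiplicity q V = 4 := by omega
    rcases this with hx | hx | hx | hx <;> omega
  have typeU : ∀ q : k, 1 ≤ rootMultiplicity q U →
      (rootMultiplicity q U = 1 ∧ rootMultiplicity q h = 3) ∨
      (rootMultiplicity q U = 2 ∧ rootMultiplicity q h = 0) ∨
      (rootMultiplicity q U = 3 ∧ rootMultiplicity q h = 3) ∨
      (rootMultiplicity q U = 4 ∧ rootMultiplicity q h = 0) := by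
    intro q hq
    have h4 := e1 q; have h5 := e2 q; have h6 := hUnotV q hq
    have h7 := rm_le hh0 q; have h8 := rm_le hU0 q
    rw [h6, mul_zero] at h4; rw [hn] at h7; rw [hdU] at h8
    have : rootMultiplicity q U = 1 ∨ rootMultiplicity q U = 2 ∨
        rootMultiplicity q U = 3 ∨ rootMultiplicity q U = 4 := by omega
    rcases this with hx | hx | hx | hx <;> omega
  -- there is a root w of V with rootMultiplicity w h ≥ 2
  obtain ⟨w, hw1, hw2⟩ : ∃ w : k, 1 ≤ rootMultiplicity w V ∧ 2 ≤ rootMultiplicity w h := by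
    obtain ⟨a, ha⟩ := IsAlgClosed.exists_root V
      (by simp [Polynomial.degree_eq_natDegree hV0, hdV])
    have ha1 : 1 ≤ rootMultiplicity a V := (Polynomial.rootMultiplicity_pos hV0).mpr ha
    rcases typeV a ha1 with ⟨_, hx⟩ | ⟨_, hx⟩ | ⟨hx, _⟩ | ⟨_, hx⟩
    · exact ⟨a, ha1, by omega⟩
    · exact ⟨a, ha1, by omega⟩
    · obtain ⟨b, hba, hb1⟩ := second_root hV0 (a := a) (by rw [hcardV]; omega)
      have hbud := rm2_le hV0 hba
      rw [hdV] at hbud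
      rcases typeV b hb1 with ⟨_, hy⟩ | ⟨hy, _⟩ | ⟨hy, _⟩ | ⟨hy, _⟩ <;>
        [exact ⟨b, hb1, by omega⟩; omega; omega; omega]
    · exact ⟨a, ha1, by omega⟩
  -- all roots of U have even multiplicity, hence U = α ((X-t)(X-u))²
  have hUeven : ∀ t : k, 1 ≤ rootMultiplicity t U →
      rootMultiplicity t U = 2 ∨ rootMultiplicity t U = 4 := by
    intro t ht
    have htw : t ≠ w := by
      intro h0
      have := hUnotV t ht
      rw [h0] at this
      omega
    have hbud := rm2_le hh0 htw
    rw [hn] at hbud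
    rcases typeU t ht with ⟨_, hx⟩ | ⟨hx, _⟩ | ⟨_, hx⟩ | ⟨hx, _⟩ <;> omega
  obtain ⟨t, u, hUshape⟩ : ∃ t u : k, U = C α * ((X - C t) * (X - C u)) ^ 2 := by
    obtain ⟨t₁, ht₁⟩ := IsAlgClosed.exists_root U
      (by simp [Polynomial.degree_eq_natDegree hU0, hdU])
    have ht₁1 : 1 ≤ rootMultiplicity t₁ U := (Polynomial.rootMultiplicity_pos hU0).mpr ht₁
    rcases hUeven t₁ ht₁1 with hx | hx
    · obtain ⟨t₂, ht21, ht22⟩ := second_root hU0 (a := t₁) (by rw [hcardU]; omega)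
      have ht₂2 : rootMultiplicity t₂ U = 2 := by
        have hbud := rm2_le hU0 ht21
        rw [hdU] at hbud
        rcases hUeven t₂ ht22 with hy | hy <;> omega
      refine ⟨t₁, t₂, ?_⟩
      have hsh := shape_pair hU0 (Ne.symm ht21) hx ht₂2 ?_
      · rw [← hα] at hsh
        rw [hsh]; ring
      · intro x hx1 hx2
        by_contra hx0
        have hx3 : 1 ≤ rootMultiplicity x U := by omega
        have hbud := rm3_le hU0 (Ne.symm ht21) (fun hh => hx1 hh.symm) (fun hh => hx2 hh.symm)
        rw [hdU] at hbud
        rcases hUeven x hx3 with hy | hy <;> omega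
    · refine ⟨t₁, t₁, ?_⟩
      have hsh := shape_full hU0 (by rw [hx, hdU])
      rw [hdU, ← hα] at hsh
      rw [hsh]; ring
  -- classify the shape of V and conclude
  obtain ⟨a, ha⟩ := IsAlgClosed.exists_root V
    (by simp [Polynomial.degree_eq_natDegree hV0, hdV])
  have ha1 : 1 ≤ rootMultiplicity a V := (Polynomial.rootMultiplicity_pos hV0).mpr ha
  have hEVU : V = U + 1 := hVU
  rcases typeV a ha1 with ⟨hx, hxh⟩ | ⟨hx, hxh⟩ | ⟨hx, hxh⟩ | ⟨hx, hxh⟩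
  · -- rm a V = 1, rm a h = 4 : second root b has rm 3; V = α (X-a)(X-b)³
    obtain ⟨b, hba, hb1⟩ := second_root hV0 (a := a) (by rw [hcardV]; omega)
    have hb3 : rootMultiplicity b V = 3 ∧ rootMultiplicity b h = 0 := by
      have hbudV := rm2_le hV0 hba
      have hbudH := rm2_le hh0 hba
      rw [hdV] at hbudV; rw [hn] at hbudH
      rcases typeV b hb1 with ⟨hy, hz⟩ | ⟨hy, hz⟩ | ⟨hy, hz⟩ | ⟨hy, hz⟩ <;> omega
    have hVshape := shape_pair hV0 (Ne.symm hba) hx hb3.1 ?_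
    · rw [hlc] at hVshape
      rw [pow_one] at hVshape
      exact s3Contra (α := α) (a := a) (b := b) (t := t) (u := u) h2k h3k hα0 (by rw [← hUshape, ← hVshape]; exact hEVU)
    · intro x hx1 hx2
      by_contra hx0
      have hx3 : 1 ≤ rootMultiplicity x V := by omega
      have hbudV := rm3_le hV0 (Ne.symm hba) (fun hh => hx1 hh.symm) (fun hh => hx2 hh.symm)
      have hbudH := rm2_le hh0 (fun hh => hx1 hh.symm)
      rw [hdV] at hbudV; rw [hn] at hbudH
      rcases typeV x hx3 with ⟨hy, hz⟩ | ⟨hy, hz⟩ | ⟨hy, hz⟩ | ⟨hy, hz⟩ <;> omega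
  · -- rm a V = 2 : second root b has rm 2; V = α ((X-a)(X-b))²
    obtain ⟨b, hba, hb1⟩ := second_root hV0 (a := a) (by rw [hcardV]; omega)
    have hb2 : rootMultiplicity b V = 2 := by
      have hbudV := rm2_le hV0 hba
      have hbudH := rm2_le hh0 hba
      rw [hdV] at hbudV; rw [hn] at hbudH
      rcases typeV b hb1 with ⟨hy, hz⟩ | ⟨hy, hz⟩ | ⟨hy, hz⟩ | ⟨hy, hz⟩ <;> omega
    have hVshape := shape_pair hV0 (Ne.symm hba) hx hb2 ?_
    · rw [hlc] at hVshape
      have hVshape' : V = C α * ((X - C a) * (X - C b)) ^ 2 := by rw [hVshape]; ring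
      exact squareContra (α := α) (a := a) (b := b) (t := t) (u := u) h2k hα0
        (by rw [← hUshape, ← hVshape']; exact hEVU)
    · intro x hx1 hx2
      by_contra hx0
      have hx3 : 1 ≤ rootMultiplicity x V := by omega
      have hbudV := rm3_le hV0 (Ne.symm hba) (fun hh => hx1 hh.symm) (fun hh => hx2 hh.symm)
      have hbudH := rm3_le hh0 (Ne.symm hba) (fun hh => hx1 hh.symm) (fun hh => hx2 hh.symm)
      rw [hdV] at hbudV; rw [hn] at hbudH
      rcases typeV x hx3 with ⟨hy, hz⟩ | ⟨hy, hz⟩ | ⟨hy, hz⟩ | ⟨hy, hz⟩ <;> omega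
  · -- rm a V = 3 : second root b has rm 1; V = α (X-b)(X-a)³
    obtain ⟨b, hba, hb1⟩ := second_root hV0 (a := a) (by rw [hcardV]; omega)
    have hb1' : rootMultiplicity b V = 1 ∧ rootMultiplicity b h = 4 := by
      have hbudV := rm2_le hV0 hba
      rw [hdV] at hbudV
      rcases typeV b hb1 with ⟨hy, hz⟩ | ⟨hy, hz⟩ | ⟨hy, hz⟩ | ⟨hy, hz⟩ <;> omega
    have hVshape := shape_pair hV0 hba hb1'.1 hx ?_
    · rw [hlc] at hVshape
      rw [pow_one] at hVshape
      exact s3Contra (α := α) (a := b) (b := a) (t := t) (u := u) h2k h3k hα0 (by rw [← hUshape, ← hVshape]; exact hEVU)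
    · intro x hx1 hx2
      by_contra hx0
      have hx3 : 1 ≤ rootMultiplicity x V := by omega
      have hbudV := rm3_le hV0 hba (fun hh => hx1 hh.symm) (fun hh => hx2 hh.symm)
      have hbudH := rm2_le hh0 (fun hh => hx1 hh.symm)
      rw [hdV] at hbudV; rw [hn] at hbudH
      rw [hb1'.2] at hbudH
      rcases typeV x hx3 with ⟨hy, hz⟩ | ⟨hy, hz⟩ | ⟨hy, hz⟩ | ⟨hy, hz⟩ <;> omega
  · -- rm a V = 4 : V = α (X-a)⁴
    have hVshape := shape_full hV0 (by rw [hx, hdV])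
    rw [hdV, hlc] at hVshape
    have hVshape' : V = C α * ((X - C a) * (X - C a)) ^ 2 := by rw [hVshape]; ring
    exact squareContra (α := α) (a := a) (b := a) (t := t) (u := u) h2k hα0
      (by rw [← hUshape, ← hVshape']; exact hEVU)

private lemma degenerate_case {k : Type*} [Field k] [IsAlgClosed k]
    (h2 : (2 : k) ≠ 0) (h3 : (3 : k) ≠ 0)
    {p : ℕ} (hprime : p.Prime) [CharP k p] (hp5 : 5 ≤ p)
    {M : ℕ} (hM : M = 3 ∨ M = 4) {f g h U V : k[X]}
    (hf0 : f ≠ 0) (hg0 : g ≠ 0) (hh0 : h ≠ 0)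
    (hfV : f ^ 3 = h * V ^ p) (hgU : g ^ 2 = h * U ^ p) (hVU : V = U + 1)
    (hf : f.natDegree = 2 * M) (hg : g.natDegree = 3 * M) (hn : h.natDegree ≤ M) : False := by
  classical
  have h4 : (4 : k) ≠ 0 := by
    intro h4
    exact h2 (by rcases mul_eq_zero.mp (show (2:k)*2 = 0 by rw [← h4]; norm_num) with h|h <;>
      exact h)
  have hU0 : U ≠ 0 := by
    intro h0
    apply pow_ne_zero 2 hg0
    rw [hgU, h0, zero_pow (Nat.Prime.ne_zero hprime), mul_zero]
  have hV0 : V ≠ 0 := by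
    intro h0
    apply pow_ne_zero 3 hf0
    rw [hfV, h0, zero_pow (Nat.Prime.ne_zero hprime), mul_zero]
  -- degree bookkeeping
  have hdegU : h.natDegree + p * U.natDegree = 6 * M := by
    have h1 : (g ^ 2).natDegree = 6 * M := by rw [Polynomial.natDegree_pow, hg]; ring
    rw [hgU, Polynomial.natDegree_mul hh0 (pow_ne_zero _ hU0), Polynomial.natDegree_pow] at h1
    omega
  have hdegV : h.natDegree + p * V.natDegree = 6 * M := by
    have h1 : (f ^ 3).natDegree = 6 * M := by rw [Polynomial.natDegree_pow, hf]; ring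
    rw [hfV, Polynomial.natDegree_mul hh0 (pow_ne_zero _ hV0), Polynomial.natDegree_pow] at h1
    omega
  have hUV : V.natDegree = U.natDegree := by
    have hp0 : 0 < p := by omega
    have := hdegU
    have := hdegV
    exact Nat.eq_of_mul_eq_mul_left hp0 (by omega)
  -- root multiplicity relations
  have e1 : ∀ q : k, 3 * rootMultiplicity q f
      = rootMultiplicity q h + p * rootMultiplicity q V := fun q => rm_eq hf0 hh0 hV0 hfV q
  have e2 : ∀ q : k, 2 * rootMultiplicity q g
      = rootMultiplicity q h + p * rootMultiplicity q U := fun q => rm_eq hg0 hh0 hU0 hgU q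
  -- roots of V are not roots of U, and vice versa
  have hVnotU : ∀ q : k, 1 ≤ rootMultiplicity q V → rootMultiplicity q U = 0 := by
    intro q hq
    have hroot : V.IsRoot q := (Polynomial.rootMultiplicity_pos hV0).mp (by omega)
    apply Polynomial.rootMultiplicity_eq_zero
    intro hU
    have : V.eval q = U.eval q + 1 := by rw [hVU]; simp
    rw [hroot, hU] at this
    simpa using this
  have hUnotV : ∀ q : k, 1 ≤ rootMultiplicity q U → rootMultiplicity q V = 0 := by
    intro q hq
    have hroot : U.IsRoot q := (Polynomial.rootMultiplicity_pos hU0).mp (by omega)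
    apply Polynomial.rootMultiplicity_eq_zero
    intro hV
    have : V.eval q = U.eval q + 1 := by rw [hVU]; simp
    rw [hV, hroot] at this
    simpa using this
  have hUevalV : ∀ q : k, V.IsRoot q → U.eval q = -1 := by
    intro q hq
    have h1 : V.eval q = U.eval q + 1 := by rw [hVU]; simp
    rw [hq.eq_zero] at h1
    linear_combination -h1
  -- U is nonconstant
  have hdU1 : 1 ≤ U.natDegree := by
    by_contra hcon
    have : U.natDegree = 0 := by omega
    rw [this, mul_zero] at hdegU
    rcases hM with rfl | rfl <;> omega
  have hple : p ≤ 6 * M := by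
    rcases hM with rfl | rfl <;> nlinarith [hdegU, hn, hdU1]
  have hdvd : p ∣ 6 * M - h.natDegree := ⟨U.natDegree, by omega⟩
  have hnn := hn
  rcases hM with rfl | rfl
  · -- M = 3
    interval_cases hh : h.natDegree <;> interval_cases p <;>
      first
        | (exfalso; revert hdvd; decide)
        | (exfalso; revert hprime; decide)
        | skip
    · -- p = 17, n = 1, dU = 1
      exact caseA hh0 hV0 e1 e2 hVnotU (Or.inl rfl) hh (by omega)
    · -- p = 5, n = 3, dU = 3
      exact caseC h3 hh0 hU0 hV0 hVU e1 e2 hVnotU hUnotV hUevalV (Or.inl rfl) hh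
        (by omega) (by omega)
  · -- M = 4
    interval_cases hh : h.natDegree <;> interval_cases p <;>
      first
        | (exfalso; revert hdvd; decide)
        | (exfalso; revert hprime; decide)
        | skip
    · -- p = 23, n = 1, dU = 1
      exact caseA hh0 hV0 e1 e2 hVnotU (Or.inr rfl) hh (by omega)
    · -- p = 11, n = 2, dU = 2
      exact caseB h2 hh0 hU0 hV0 hVU e1 e2 hVnotU hUnotV hUevalV rfl hh (by omega) (by omega)
    · -- p = 7, n = 3, dU = 3
      exact caseC h3 hh0 hU0 hV0 hVU e1 e2 hVnotU hUnotV hUevalV (Or.inr rfl) hh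
        (by omega) (by omega)
    · -- p = 5, n = 4, dU = 4
      exact caseD h2 h3 hh0 hU0 hV0 hVU e1 e2 hVnotU hUnotV rfl hh (by omega) (by omega)

/-- If `k` is algebraically closed of characteristic different from 2 and 3, `M = 3` or `4`,
`f, g ∈ k[T]` with `deg f = 2M`, `deg g = 3M` and `f³ ≠ g²`, then `deg(f³ - g²) ≥ M + 1`. -/
theorem deg_f_cubed_sub_g_squared_ge (k : Type*) [Field k] [IsAlgClosed k]
    (h2 : (2 : k) ≠ 0) (h3 : (3 : k) ≠ 0)
    (M : ℕ) (hM : M = 3 ∨ M = 4)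
    (f g : k[X]) (hf : f.natDegree = 2 * M) (hg : g.natDegree = 3 * M)
    (hne : f ^ 3 ≠ g ^ 2) :
    M + 1 ≤ (f ^ 3 - g ^ 2).natDegree := by
  classical
  by_contra hcon
  push_neg at hcon
  set h : k[X] := f ^ 3 - g ^ 2 with hdef
  have hM3 : 3 ≤ M := by rcases hM with rfl | rfl <;> norm_num
  have hM4 : M ≤ 4 := by rcases hM with rfl | rfl <;> norm_num
  have hh0 : h ≠ 0 := sub_ne_zero.mpr hne
  have hf0 : f ≠ 0 := by
    intro h0
    rw [h0] at hf
    simp at hf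
    omega
  have hg0 : g ≠ 0 := by
    intro h0
    rw [h0] at hg
    simp at hg
    omega
  have hn : h.natDegree ≤ M := by omega
  -- derivative of h
  have hd : derivative h = 3 * f ^ 2 * derivative f - 2 * g * derivative g := by
    rw [hdef, derivative_sub, derivative_pow, derivative_pow]
    push_cast
    rw [show (C 3 : k[X]) = 3 from map_ofNat C 3, show (C 2 : k[X]) = 2 from map_ofNat C 2]
    ring
  -- Wronskian-type identity
  have key : derivative h * g - 2 * h * derivative g
      = f ^ 2 * (3 * derivative f * g - 2 * f * derivative g) := by
    rw [hdef]
    linear_combination g * hd - 2 * derivative g * hdef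
  -- the combination 3f'g - 2fg' must vanish
  have hvanish : derivative h * g - 2 * h * derivative g = 0 := by
    by_cases hP : 3 * derivative f * g - 2 * f * derivative g = 0
    · rw [key, hP, mul_zero]
    · exfalso
      have hL : (f ^ 2 * (3 * derivative f * g - 2 * f * derivative g)).natDegree = 4 * M
          + (3 * derivative f * g - 2 * f * derivative g).natDegree := by
        rw [Polynomial.natDegree_mul (pow_ne_zero _ hf0) hP, Polynomial.natDegree_pow, hf]
        ring
      have hR : (derivative h * g - 2 * h * derivative g).natDegree ≤ 4 * M - 1 := by
        apply le_trans (Polynomial.natDegree_sub_le _ _)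
        have b1 : (derivative h * g).natDegree ≤ 4 * M - 1 := by
          apply le_trans (Polynomial.natDegree_mul_le)
          have := Polynomial.natDegree_derivative_le h
          omega
        have b2 : (2 * h * derivative g).natDegree ≤ 4 * M - 1 := by
          apply le_trans (Polynomial.natDegree_mul_le)
          have hb := Polynomial.natDegree_mul_le (p := (2 : k[X])) (q := h)
          have := Polynomial.natDegree_derivative_le g
          have h2d : (2 : k[X]).natDegree = 0 := Polynomial.natDegree_C 2
          omega
        omega
      rw [key] at hR
      omega
  have keyr : derivative h * g = 2 * h * derivative g := by linear_combination hvanish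
  -- zero Wronskian of g² and h
  have hW : derivative (g ^ 2) * h = g ^ 2 * derivative h := by
    rw [derivative_pow]
    push_cast
    rw [show (C 2 : k[X]) = 2 from map_ofNat C 2]
    linear_combination -g * keyr
  obtain ⟨d, u, w, hgd, hhd, hu', hw', hcop⟩ :=
    wronskian_descent (pow_ne_zero 2 hg0) hh0 hW
  have hd0 : d ≠ 0 := fun h0 => hh0 (by rw [hhd, h0, zero_mul])
  have hw0 : w ≠ 0 := fun h0 => hh0 (by rw [hhd, h0, mul_zero])
  have hu0 : u ≠ 0 := fun h0 => (pow_ne_zero 2 hg0) (by rw [hgd, h0, mul_zero])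
  -- w is a nonzero constant
  have hwdeg : w.natDegree = 0 := by
    apply small_const h2 h3 hw'
    have := congrArg natDegree hhd
    rw [Polynomial.natDegree_mul hd0 hw0] at this
    omega
  set c := w.coeff 0 with hc
  have hwc : w = C c := Polynomial.eq_C_of_natDegree_eq_zero hwdeg
  have hc0 : c ≠ 0 := fun h0 => hw0 (by rw [hwc, h0, map_zero])
  -- u₂ := c⁻¹ u satisfies g² = h u₂
  set u₂ : k[X] := C c⁻¹ * u with hu₂
  have hgu : g ^ 2 = h * u₂ := by
    rw [hhd, hwc, hu₂, hgd]
    rw [show d * C c * (C c⁻¹ * u) = d * u * C (c * c⁻¹) by rw [C_mul]; ring,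
      mul_inv_cancel₀ hc0, C_1, mul_one]
  have hu₂' : derivative u₂ = 0 := by
    rw [hu₂, derivative_mul, hu', derivative_C]
    simp
  set v₂ : k[X] := u₂ + 1 with hv₂
  have hfv : f ^ 3 = h * v₂ := by
    rw [hv₂, mul_add, mul_one, ← hgu]
    rw [hdef]
    ring
  have hv₂' : derivative v₂ = 0 := by rw [hv₂, derivative_add, hu₂', derivative_one, add_zero]
  have hu₂0 : u₂ ≠ 0 := fun h0 => (pow_ne_zero 2 hg0) (by rw [hgu, h0, mul_zero])
  -- characteristic analysis
  obtain ⟨p, hp⟩ := CharP.exists k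
  rcases CharP.char_is_prime_or_zero k p with hprime | hzero
  · -- positive characteristic p
    haveI := hp
    haveI : Fact p.Prime := ⟨hprime⟩
    have hp2 : p ≠ 2 := by
      intro h0
      apply h2
      have := CharP.cast_eq_zero k p
      rw [h0] at this
      exact_mod_cast this
    have hp3 : p ≠ 3 := by
      intro h0
      apply h3
      have := CharP.cast_eq_zero k p
      rw [h0] at this
      exact_mod_cast this
    have hp4 : p ≠ 4 := by
      intro h0
      rw [h0] at hprime
      norm_num at hprime
    have hp5 : 5 ≤ p := by
      have := hprime.two_le
      omega
    obtain ⟨U, hU⟩ := pth_root p hu₂'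
    obtain ⟨V, hV⟩ := pth_root p hv₂'
    have hVU : V = U + 1 := by
      have hsub : (V - (U + 1)) ^ p = 0 := by
        have e1 : (V - (U + 1)) ^ p = V ^ p - (U + 1) ^ p := sub_pow_char _ _
        have e2 : (U + 1) ^ p = U ^ p + 1 := by rw [add_pow_char, one_pow]
        rw [e1, e2, hU, hV, hv₂]
        ring
      have := pow_eq_zero_iff (Nat.Prime.ne_zero hprime) |>.mp hsub
      linear_combination this
    rw [← hU] at hgu
    rw [← hV] at hfv
    exact degenerate_case h2 h3 hprime hp5 hM hf0 hg0 hh0 hfv hgu hVU hf hg hn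
  · -- characteristic zero
    rw [hzero] at hp
    haveI := hp
    haveI : CharZero k := CharP.charP_to_charZero k
    have hu₂deg : u₂.natDegree = 0 := Polynomial.natDegree_eq_zero_of_derivative_eq_zero hu₂'
    have := congrArg natDegree hgu
    rw [Polynomial.natDegree_mul hh0 hu₂0, Polynomial.natDegree_pow, hg, hu₂deg] at this
    omega
end

section
/- Let k be an algebraically closed field of characteristic different from 2 and 3, and fix M = 3 or M = 4. Then there exist polynomials f, g ∈ k[T] with deg(f) = 2M, deg(g) = 3M, f³ ≠ g², and deg(f³ − g²) = M + 1. -/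
open Polynomial

/-- If `k` is algebraically closed of characteristic different from 2 and 3 and `M = 3` or `4`,
then there exist `f, g ∈ k[T]` with `deg f = 2M`, `deg g = 3M`, `f³ ≠ g²` and
`deg(f³ - g²) = M + 1`. -/
theorem exists_f_g_deg_f_cubed_sub_g_squared_eq (k : Type*) [Field k] [IsAlgClosed k]
    (h2 : (2 : k) ≠ 0) (h3 : (3 : k) ≠ 0)
    (M : ℕ) (hM : M = 3 ∨ M = 4) :
    ∃ f g : k[X], f.natDegree = 2 * M ∧ g.natDegree = 3 * M ∧ f ^ 3 ≠ g ^ 2 ∧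
      (f ^ 3 - g ^ 2).natDegree = M + 1 := by
  have h4 : (4 : k) ≠ 0 := by
    have := mul_ne_zero h2 h2; norm_num at this ⊢; exact this
  have h8 : (8 : k) ≠ 0 := by
    have := mul_ne_zero h2 (mul_ne_zero h2 h2); norm_num at this ⊢; exact this
  have h1728 : (1728 : k) ≠ 0 := by
    have := mul_ne_zero (pow_ne_zero 6 h2) (pow_ne_zero 3 h3); norm_num at this ⊢; exact this
  have hbig : (7421703487488 : k) ≠ 0 := by
    have := mul_ne_zero (pow_ne_zero 38 h2) (pow_ne_zero 3 h3); norm_num at this ⊢; exact this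
  rcases hM with rfl | rfl
  · -- M = 3
    refine ⟨4*X^6+16*X^4+40*X^2+24, 8*X^9+48*X^7+168*X^5+280*X^3+252*X, ?_, ?_, ?_, ?_⟩
    · compute_degree!
    · compute_degree!
    · intro h
      have hD : ((4*X^6+16*X^4+40*X^2+24 : k[X])^3 - (8*X^9+48*X^7+168*X^5+280*X^3+252*X)^2)
          = 1728*X^4+5616*X^2+13824 := by ring
      rw [sub_eq_zero.mpr h] at hD
      have : ((1728*X^4+5616*X^2+13824 : k[X])).coeff 4 = 0 := by rw [← hD]; simp
      simp only [coeff_add, coeff_ofNat_mul, coeff_X_pow] at this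
      norm_num at this
      exact h1728 this
    · have hD : ((4*X^6+16*X^4+40*X^2+24 : k[X])^3 - (8*X^9+48*X^7+168*X^5+280*X^3+252*X)^2)
          = 1728*X^4+5616*X^2+13824 := by ring
      rw [hD]
      compute_degree!
  · -- M = 4
    refine ⟨X^8+84*X^6+176*X^5+2366*X^4+13536*X^3+26884*X^2+218864*X+268777,
      X^12+126*X^10+264*X^9+6195*X^8+31392*X^7+163956*X^6+1260528*X^5+3531639*X^4
        +19770400*X^3+62912622*X^2+94024776*X+291742453, ?_, ?_, ?_, ?_⟩
    · compute_degree!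
    · compute_degree!
    · intro h
      have hD : ((X^8+84*X^6+176*X^5+2366*X^4+13536*X^3+26884*X^2+218864*X+268777 : k[X])^3
          - (X^12+126*X^10+264*X^9+6195*X^8+31392*X^7+163956*X^6+1260528*X^5+3531639*X^4
            +19770400*X^3+62912622*X^2+94024776*X+291742453)^2)
          = -(7421703487488*X^5) - 460145616224256*X^3 - 1098412116148224*X^2
            - 7429125190975488*X - 65696919271243776 := by ring
      rw [sub_eq_zero.mpr h] at hD
      have : ((-(7421703487488*X^5) - 460145616224256*X^3 - 1098412116148224*X^2
          - 7429125190975488*X - 65696919271243776 : k[X])).coeff 5 = 0 := by rw [← hD]; simp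
      simp only [coeff_sub, coeff_neg, coeff_ofNat_mul, coeff_X_pow, coeff_X] at this
      norm_num at this
      exact hbig this
    · have hD : ((X^8+84*X^6+176*X^5+2366*X^4+13536*X^3+26884*X^2+218864*X+268777 : k[X])^3
          - (X^12+126*X^10+264*X^9+6195*X^8+31392*X^7+163956*X^6+1260528*X^5+3531639*X^4
            +19770400*X^3+62912622*X^2+94024776*X+291742453)^2)
          = -(7421703487488*X^5) - 460145616224256*X^3 - 1098412116148224*X^2
            - 7429125190975488*X - 65696919271243776 := by ring
      rw [hD]
      compute_degree!
end

section
/- Let K be the field of rational functions ℚ(a, T) (the fraction field of ℚ[a, T]), and let W be the elliptic curve over K given by the Weierstrass equation Y² = X³ + AX² + BX + 1/4 with A = T⁴ + aT² + a²/4 and B = T² + a/2 (its discriminant (2T² + a − 3)(4T⁴ + (6 + 4a)T² + 9 + 3a + a²) is nonzero in K, so W is an elliptic curve). Then the affine points P₊ = (0, 1/2) and P₋ = (0, −1/2) lie on W and are 3-torsion points of the group W(K): each satisfies 3·P = O and P ≠ O, where O is the point at infinity. -/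
open WeierstrassCurve

/-- The field `ℚ(a, T)` of rational functions in two variables over `ℚ`. -/
noncomputable abbrev QaT : Type := FractionRing (MvPolynomial (Fin 2) ℚ)

/-- The image of `a` in `ℚ(a, T)`. -/
noncomputable def aQ : QaT := algebraMap (MvPolynomial (Fin 2) ℚ) QaT (MvPolynomial.X 0)

/-- The image of `T` in `ℚ(a, T)`. -/
noncomputable def TQ : QaT := algebraMap (MvPolynomial (Fin 2) ℚ) QaT (MvPolynomial.X 1)

/-- The Weierstrass curve `Y² = X³ + (T⁴ + aT² + a²/4)X² + (T² + a/2)X + 1/4` over `ℚ(a, T)`. -/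
noncomputable def W8 : WeierstrassCurve.Affine QaT :=
  { a₁ := 0
    a₂ := TQ ^ 4 + aQ * TQ ^ 2 + aQ ^ 2 / 4
    a₃ := 0
    a₄ := TQ ^ 2 + aQ / 2
    a₆ := 1 / 4 }

private lemma some_congr {W : WeierstrassCurve.Affine QaT} {x₁ y₁ x₂ y₂ : QaT}
    (h₁ : W.Nonsingular x₁ y₁) (h₂ : W.Nonsingular x₂ y₂) (hx : x₁ = x₂) (hy : y₁ = y₂) :
    WeierstrassCurve.Affine.Point.some _ _ h₁ = WeierstrassCurve.Affine.Point.some _ _ h₂ := by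
  subst hx; subst hy; rfl

private lemma delta_ne : W8.Δ ≠ 0 := by
  have hΔ : W8.Δ = algebraMap (MvPolynomial (Fin 2) ℚ) QaT
      ((2 * MvPolynomial.X 1 ^ 2 + MvPolynomial.X 0) ^ 3 - 27) := by
    simp only [WeierstrassCurve.Δ, b₂, b₄, b₆, b₈, W8, map_sub, map_add, map_mul, map_pow,
      map_ofNat]
    show _ = (2 * TQ ^ 2 + aQ) ^ 3 - 27
    ring
  rw [hΔ, ne_eq, map_eq_zero_iff _ (IsFractionRing.injective _ _), sub_eq_zero]
  intro h
  have := congrArg (MvPolynomial.eval (fun _ => (0 : ℚ))) h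
  rw [map_ofNat] at this
  simp at this

/-- The points `(0, 1/2)` and `(0, -1/2)` lie on the curve
`Y² = X³ + (T⁴ + aT² + a²/4)X² + (T² + a/2)X + 1/4` over `ℚ(a, T)` (whose discriminant is
nonzero) and are 3-torsion points of its group of rational points. -/
theorem three_torsion_points_of_I18_family :
    ∃ (hp : WeierstrassCurve.Affine.Nonsingular W8 0 (1/2))
      (hm : WeierstrassCurve.Affine.Nonsingular W8 0 (-(1/2))),
      W8.Δ ≠ 0 ∧
      3 • (WeierstrassCurve.Affine.Point.some _ _ hp) = 0 ∧
      WeierstrassCurve.Affine.Point.some _ _ hp ≠ 0 ∧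
      3 • (WeierstrassCurve.Affine.Point.some _ _ hm) = 0 ∧
      WeierstrassCurve.Affine.Point.some _ _ hm ≠ 0 := by
  have heq : W8.Equation 0 (1/2) := by
    rw [WeierstrassCurve.Affine.equation_iff]
    simp only [W8]
    norm_num
  have hp : W8.Nonsingular 0 (1/2) := by
    rw [WeierstrassCurve.Affine.nonsingular_iff]
    refine ⟨heq, Or.inr ?_⟩
    simp only [W8]
    norm_num
  have hm : W8.Nonsingular 0 (-(1/2)) := by
    have := WeierstrassCurve.Affine.nonsingular_neg _ _ |>.mpr hp
    have h' : (-(1/2) : QaT) = W8.negY 0 (1/2) := by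
      simp only [WeierstrassCurve.Affine.negY, W8]; ring
    rw [h']; exact this
  have h' : (-(1/2) : QaT) = W8.negY 0 (1/2) := by
    simp only [WeierstrassCurve.Affine.negY, W8]; ring
  have h'' : (1/2 : QaT) = W8.negY 0 (-(1/2)) := by
    simp only [WeierstrassCurve.Affine.negY, W8]; ring
  have htwo : (2 : QaT) ≠ 0 := two_ne_zero
  have hyne : (1/2 : QaT) ≠ W8.negY 0 (1/2) := by
    rw [← h']
    intro h
    exact one_ne_zero (α := QaT) (by linear_combination h)
  have hyne' : (-(1/2) : QaT) ≠ W8.negY 0 (-(1/2)) := by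
    rw [← h'']
    intro h
    exact one_ne_zero (α := QaT) (by linear_combination -h)
  refine ⟨hp, hm, delta_ne, ?_, WeierstrassCurve.Affine.Point.some_ne_zero hp, ?_,
    WeierstrassCurve.Affine.Point.some_ne_zero hm⟩
  · have hxx : W8.addX 0 0 (W8.slope 0 0 (1/2) (1/2)) = 0 := by
      rw [WeierstrassCurve.Affine.slope_of_Y_ne rfl hyne]
      simp only [WeierstrassCurve.Affine.addX, WeierstrassCurve.Affine.negY, W8]
      field_simp
      ring
    have hyy : W8.addY 0 0 (1/2) (W8.slope 0 0 (1/2) (1/2)) = -(1/2) := by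
      rw [WeierstrassCurve.Affine.addY, WeierstrassCurve.Affine.negAddY, hxx,
        WeierstrassCurve.Affine.slope_of_Y_ne rfl hyne]
      simp only [WeierstrassCurve.Affine.negY, W8]
      field_simp
      ring
    have h2 := WeierstrassCurve.Affine.Point.add_self_of_Y_ne (h₁ := hp) hyne
    have key : WeierstrassCurve.Affine.Point.some _ _
        (WeierstrassCurve.Affine.nonsingular_add hp hp fun hxy => hyne hxy.right)
        = WeierstrassCurve.Affine.Point.some _ _ hm := some_congr _ hm hxx hyy
    rw [show (3 : ℕ) • WeierstrassCurve.Affine.Point.some _ _ hp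
        = (WeierstrassCurve.Affine.Point.some _ _ hp + WeierstrassCurve.Affine.Point.some _ _ hp)
          + WeierstrassCurve.Affine.Point.some _ _ hp from by rw [succ_nsmul, two_nsmul],
      h2, key]
    exact WeierstrassCurve.Affine.Point.add_of_Y_eq rfl h'
  · have hxx : W8.addX 0 0 (W8.slope 0 0 (-(1/2)) (-(1/2))) = 0 := by
      rw [WeierstrassCurve.Affine.slope_of_Y_ne rfl hyne']
      simp only [WeierstrassCurve.Affine.addX, WeierstrassCurve.Affine.negY, W8]
      field_simp
      ring
    have hyy : W8.addY 0 0 (-(1/2)) (W8.slope 0 0 (-(1/2)) (-(1/2))) = 1/2 := by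
      rw [WeierstrassCurve.Affine.addY, WeierstrassCurve.Affine.negAddY, hxx,
        WeierstrassCurve.Affine.slope_of_Y_ne rfl hyne']
      simp only [WeierstrassCurve.Affine.negY, W8]
      field_simp
      ring
    have h2 := WeierstrassCurve.Affine.Point.add_self_of_Y_ne (h₁ := hm) hyne'
    have key : WeierstrassCurve.Affine.Point.some _ _
        (WeierstrassCurve.Affine.nonsingular_add hm hm fun hxy => hyne' hxy.right)
        = WeierstrassCurve.Affine.Point.some _ _ hp := some_congr _ hp hxx hyy
    rw [show (3 : ℕ) • WeierstrassCurve.Affine.Point.some _ _ hm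
        = (WeierstrassCurve.Affine.Point.some _ _ hm + WeierstrassCurve.Affine.Point.some _ _ hm)
          + WeierstrassCurve.Affine.Point.some _ _ hm from by rw [succ_nsmul, two_nsmul],
      h2, key]
    exact WeierstrassCurve.Affine.Point.add_of_Y_eq rfl h''
end

section
/- Let R be a commutative ring and π ∈ R an element with π ∣ 2. Let W be a Weierstrass curve over R with coefficients a₁, a₂, a₃, a₄, a₆ such that π divides a₁ and a₂, π² divides a₃ and a₄, and π⁴ divides a₆. Then π⁸ divides the discriminant Δ of W. (This is the key divisibility underlying the lower bound on wild ramification for fibres of type I₀* in residue characteristic 2.) -/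
/-- If `π ∣ 2` and, for a Weierstrass curve, `π ∣ a₁, a₂`, `π² ∣ a₃, a₄` and `π⁴ ∣ a₆`, then
`π⁸` divides the discriminant.  This underlies the lower bound on wild ramification for
fibres of type `I₀*` in residue characteristic 2. -/
theorem pow_eight_dvd_discriminant (R : Type*) [CommRing R] (π : R) (hπ : π ∣ 2)
    (W : WeierstrassCurve R) (h1 : π ∣ W.a₁) (h2 : π ∣ W.a₂) (h3 : π ^ 2 ∣ W.a₃)
    (h4 : π ^ 2 ∣ W.a₄) (h6 : π ^ 4 ∣ W.a₆) :
    π ^ 8 ∣ W.Δ := by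
  obtain ⟨t, ht⟩ := hπ
  obtain ⟨x1, hx1⟩ := h1
  obtain ⟨x2, hx2⟩ := h2
  obtain ⟨x3, hx3⟩ := h3
  obtain ⟨x4, hx4⟩ := h4
  obtain ⟨x6, hx6⟩ := h6
  have h4' : (4 : R) = π ^ 2 * t ^ 2 := by
    have : (4 : R) = 2 * 2 := by norm_num
    rw [this, ht]; ring
  have h8' : (8 : R) = π ^ 3 * t ^ 3 := by
    have : (8 : R) = 2 * 2 * 2 := by norm_num
    rw [this, ht]; ring
  refine ⟨(0 - 27 * x3^4 + 1 * x1^4 * x4^2 + 9 * π * x1^3 * x3^3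
    - 1 * π * x1^4 * x2 * x3^2 + 1 * π * x1^5 * x3 * x4
    + 9 * π * t * x1^2 * x3^2 * x4 + 2 * π * t^2 * x1^2 * x2 * x4^2
    - 1 * π^2 * x1^6 * x6 - 54 * π^2 * t^2 * x3^2 * x6
    + 9 * π^2 * t^2 * x1 * x2 * x3^3 - 2 * π^2 * t^2 * x1^2 * x2^2 * x3^2
    + 2 * π^2 * t^2 * x1^3 * x2 * x3 * x4 + 9 * π^2 * t^3 * x2 * x3^2 * x4
    + 1 * π^2 * t^4 * x2^2 * x4^2 + 9 * π^3 * t^2 * x1^3 * x3 * x6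
    - 3 * π^3 * t^2 * x1^4 * x2 * x6 + 9 * π^3 * t^3 * x1^2 * x4 * x6
    - 1 * π^3 * t^4 * x2^3 * x3^2 + 1 * π^3 * t^4 * x1 * x2^2 * x3 * x4
    - 1 * π^4 * t^3 * x1^3 * x3^3 - 27 * π^4 * t^4 * x6^2
    + 9 * π^4 * t^4 * x1 * x2 * x3 * x6 - 3 * π^4 * t^4 * x1^2 * x3^2 * x4
    - 3 * π^4 * t^4 * x1^2 * x2^2 * x6 + 9 * π^4 * t^5 * x2 * x4 * x6
    - 3 * π^4 * t^5 * x1 * x3 * x4^2 - 1 * π^4 * t^6 * x4^3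
    - 1 * π^5 * t^6 * x2^3 * x6), ?_⟩
  conv_lhs => simp only [WeierstrassCurve.Δ, WeierstrassCurve.b₂, WeierstrassCurve.b₄,
    WeierstrassCurve.b₆, WeierstrassCurve.b₈, hx1, hx2, hx3, hx4, hx6, h4', h8', ht]
  ring
end

section
/- Let k be a field of characteristic 19. In k[T], set f = T⁷(T − 1) and g = T(T − 1)¹¹, so that deg(f) = 8 = 2M and deg(g) = 12 = 3M with M = 4. Then f³ − g² = T²(T − 1)³; in particular deg(f³ − g²) = 5 = M + 1. (This witnesses the sharpness of the degree bound deg(f³ − g²) ≥ M + 1 in characteristic 19, corresponding to the unique elliptic K3 surface Y² = X³ − 3T⁷(T − 1)X + 2T(T − 1)¹¹ with a fibre of type I₁₉ in characteristic 19.) -/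
open Polynomial

/-- In characteristic 19, with `f = T⁷(T − 1)` and `g = T(T − 1)¹¹` (of degrees `8 = 2M` and
`12 = 3M` for `M = 4`), one has `f³ − g² = T²(T − 1)³`, of degree `5 = M + 1`.  This
witnesses the sharpness of the bound `deg(f³ − g²) ≥ M + 1` in characteristic 19. -/
theorem f_cubed_sub_g_squared_char_19 (k : Type*) [Field k] [CharP k 19]
    (f g : k[X]) (hf : f = X ^ 7 * (X - 1)) (hg : g = X * (X - 1) ^ 11) :
    f.natDegree = 2 * 4 ∧ g.natDegree = 3 * 4 ∧
      f ^ 3 - g ^ 2 = X ^ 2 * (X - 1) ^ 3 ∧ (f ^ 3 - g ^ 2).natDegree = 4 + 1 := by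
  subst hf hg
  haveI : Fact (Nat.Prime 19) := ⟨by norm_num⟩
  have h19 : ((X : k[X]) - 1) ^ (19 : ℕ) = X ^ 19 - 1 := by
    simpa using sub_pow_char (p := 19) (x := (X : k[X])) (y := 1)
  have key : ((X : k[X]) ^ 7 * (X - 1)) ^ 3 - (X * (X - 1) ^ 11) ^ 2
      = X ^ 2 * (X - 1) ^ 3 := by
    have h : ((X : k[X]) ^ 7 * (X - 1)) ^ 3 - (X * (X - 1) ^ 11) ^ 2
        = X ^ 2 * (X - 1) ^ 3 * (X ^ 19 - (X - 1) ^ 19) := by ring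
    rw [h, h19]; ring
  refine ⟨?_, ?_, key, ?_⟩
  · compute_degree!
  · compute_degree!
  · rw [key]; compute_degree!
end

section
/- Let k be a field of characteristic 7. In k[T], set f = (T + 1)³(T − 1)³ and g = T⁷(T + 1)(T − 1), so that deg(f) = 6 = 2M and deg(g) = 9 = 3M with M = 3. Then f³ − g² = −((T² − 1))²; in particular deg(f³ − g²) = 4 = M + 1. (This witnesses the sharpness of the degree bound deg(f³ − g²) ≥ M + 1 in characteristic 7, corresponding to the unique elliptic K3 surface Y² = X³ − 3(T + 1)³(T − 1)³X − 2T⁷(T + 1)(T − 1) with a fibre of type I₁₄* in characteristic 7.) -/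
open Polynomial

/-- In characteristic 7, with `f = (T + 1)³(T − 1)³` and `g = T⁷(T + 1)(T − 1)` (of degrees
`6 = 2M` and `9 = 3M` for `M = 3`), one has `f³ − g² = −(T² − 1)²`, of degree `4 = M + 1`.
This witnesses the sharpness of the bound `deg(f³ − g²) ≥ M + 1` in characteristic 7. -/
theorem f_cubed_sub_g_squared_char_7 (k : Type*) [Field k] [CharP k 7]
    (f g : k[X]) (hf : f = (X + 1) ^ 3 * (X - 1) ^ 3) (hg : g = X ^ 7 * (X + 1) * (X - 1)) :
    f.natDegree = 2 * 3 ∧ g.natDegree = 3 * 3 ∧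
      f ^ 3 - g ^ 2 = -((X ^ 2 - 1) ^ 2) ∧ (f ^ 3 - g ^ 2).natDegree = 3 + 1 := by
  subst hf hg
  have h7 : (7 : k[X]) = 0 := by
    exact_mod_cast CharP.cast_eq_zero k[X] 7
  have key : ((X + 1) ^ 3 * (X - 1) ^ 3 : k[X]) ^ 3 - (X ^ 7 * (X + 1) * (X - 1)) ^ 2
      = -((X ^ 2 - 1) ^ 2) := by
    linear_combination (X ^ 2 - 5 * X ^ 4 + 12 * X ^ 6 - 18 * X ^ 8 + 18 * X ^ 10
      - 12 * X ^ 12 + 5 * X ^ 14 - X ^ 16 : k[X]) * h7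
  refine ⟨?_, ?_, key, ?_⟩
  · compute_degree!
  · compute_degree!
  · rw [key, natDegree_neg]
    have e : ((X ^ 2 - 1) ^ 2 : k[X]) = X ^ 4 - 2 * X ^ 2 + 1 := by ring
    rw [e]
    compute_degree!
end

section
/- Let k be an algebraically closed field of characteristic 2, let λ ∈ k with λ ≠ 0, and let K = k(T) be the rational function field. Consider the two Weierstrass curves over K: W₁ given by Y² + XY = X³ + (λT + 1/T³)X² + (T³ + 1)/T¹², and W₂ given by Y² + TXY + Y = X³ + λT³X² + λT. Then W₁ and W₂ are isomorphic over K: there exists an admissible change of variables (u, r, s, t) with u ∈ K×, r, s, t ∈ K transforming W₁ into W₂. (W₂ is the minimal model of the twisted curve W₁; it is the elliptic K3 surface with a fibre of type I₁₃* in characteristic 2.) -/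
/-- Over `K = k(T)` with `k` algebraically closed of characteristic 2 and `λ ≠ 0`, the
Weierstrass curves `W₁ : Y² + XY = X³ + (λT + 1/T³)X² + (T³ + 1)/T¹²` and
`W₂ : Y² + TXY + Y = X³ + λT³X² + λT` are isomorphic over `K` via an admissible change of
variables; `W₂` is the minimal model, the elliptic K3 surface with a fibre of type `I₁₃*`. -/
theorem I13_star_twist_minimal_model (k : Type*) [Field k] [IsAlgClosed k] [CharP k 2]
    (lam : k) (hlam : lam ≠ 0)
    (W₁ W₂ : WeierstrassCurve (RatFunc k))
    (h₁a₁ : W₁.a₁ = 1)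
    (h₁a₂ : W₁.a₂ = algebraMap k (RatFunc k) lam * RatFunc.X + 1 / RatFunc.X ^ 3)
    (h₁a₃ : W₁.a₃ = 0) (h₁a₄ : W₁.a₄ = 0)
    (h₁a₆ : W₁.a₆ = (RatFunc.X ^ 3 + 1) / RatFunc.X ^ 12)
    (h₂a₁ : W₂.a₁ = RatFunc.X)
    (h₂a₂ : W₂.a₂ = algebraMap k (RatFunc k) lam * RatFunc.X ^ 3)
    (h₂a₃ : W₂.a₃ = 1) (h₂a₄ : W₂.a₄ = 0)
    (h₂a₆ : W₂.a₆ = algebraMap k (RatFunc k) lam * RatFunc.X) :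
    ∃ C : WeierstrassCurve.VariableChange (RatFunc k), C • W₁ = W₂ := by
  have hX : (RatFunc.X : RatFunc k) ≠ 0 := RatFunc.X_ne_zero
  have h2 : (2 : RatFunc k) = 0 := by
    haveI : CharP (RatFunc k) 2 := charP_of_injective_algebraMap
      (algebraMap k (RatFunc k)).injective 2
    exact_mod_cast CharP.cast_eq_zero (RatFunc k) 2
  refine ⟨⟨(Units.mk0 RatFunc.X hX)⁻¹, RatFunc.X⁻¹ ^ 3, 0, RatFunc.X⁻¹ ^ 6⟩, ?_⟩
  ext
  case a₁ =>
    simp only [WeierstrassCurve.variableChange_a₁, h₁a₁, h₂a₁, Units.val_mk0,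
      Units.val_inv_eq_inv_val, inv_inv]
    field_simp
    ring
  case a₂ =>
    simp only [WeierstrassCurve.variableChange_a₂, h₁a₂, h₁a₁, h₂a₂, Units.val_mk0,
      Units.val_inv_eq_inv_val, inv_inv]
    field_simp
    linear_combination 2 * h2
  case a₃ =>
    simp only [WeierstrassCurve.variableChange_a₃, h₁a₃, h₁a₁, h₂a₃, Units.val_mk0,
      Units.val_inv_eq_inv_val, inv_inv]
    field_simp
    linear_combination h2
  case a₄ =>
    simp only [WeierstrassCurve.variableChange_a₄, h₁a₄, h₁a₁, h₁a₂, h₁a₃, h₂a₄,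
      Units.val_mk0, Units.val_inv_eq_inv_val, inv_inv, RatFunc.algebraMap_eq_C]
    field_simp
    linear_combination (2 + RatFunc.X ^ 4 * RatFunc.C lam) * h2
  case a₆ =>
    simp only [WeierstrassCurve.variableChange_a₆, h₁a₆, h₁a₁, h₁a₂, h₁a₃, h₁a₄, h₂a₆,
      Units.val_mk0, Units.val_inv_eq_inv_val, inv_inv, RatFunc.algebraMap_eq_C]
    have h30 : RatFunc.X ^ 30 * (RatFunc.X⁻¹ : RatFunc k) ^ 30 = 1 := by
      rw [← mul_pow, mul_inv_cancel₀ hX, one_pow]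
    field_simp
    linear_combination RatFunc.X ^ 3 * h2
end
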